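/- For all b, c ∈ V, the rational Dunkl operator satisfies the cross-relation D_b ∘ x_c − x_c ∘ D_b = (b,c)·id + Σ_{α ∈ R_+} k_α (b,α)(c,α^∨)·s_α as operators on ℂ[V], where x_c also denotes the operator of multiplication by the linear polynomial x_c and α^∨ = 2α/(α,α). -/

import Mathlib

noncomputable section

open scoped RealInnerProductSpace BigOperators

namespace Stmt16

/-- Euclidean space `V = ℝ^n`. -/
abbrev V (n : ℕ) := EuclideanSpace ℝ (Fin n)

/-- Polynomial functions on `V`, in coordinates. -/
abbrev Poly (n : ℕ) := MvPolynomial (Fin n) ℂ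

/-- The linear polynomial `x_b = (b, ·)`. -/
def xpoly (n : ℕ) (b : V n) : Poly n :=
  ∑ i : Fin n, MvPolynomial.C (b i : ℂ) * MvPolynomial.X i

/-- The action of the orthogonal reflection `s_α` on polynomial functions,
`(s_α f)(v) = f(s_α v)`, given by the substitution
`X_i ↦ X_i − (e_i, α^∨)·x_α`. -/
def sAct (n : ℕ) (α : V n) : Poly n →ₐ[ℂ] Poly n :=
  MvPolynomial.aeval fun i : Fin n =>
    MvPolynomial.X i - MvPolynomial.C ((2 * (α i) / ⟪α, α⟫ : ℝ) : ℂ) * xpoly n α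

/-- The directional derivative `∂_b` on polynomials. -/
def der (n : ℕ) (b : V n) (f : Poly n) : Poly n :=
  ∑ i : Fin n, MvPolynomial.C (b i : ℂ) * MvPolynomial.pderiv i f

/-- `IsDunkl Rplus k b Dop` says that `Dop` is the rational Dunkl operator
`D_b f = ∂_b f + Σ_{α ∈ R_+} k_α (b,α)·(f − s_α f)/x_α`
(the quotient `(f − s_α f)/x_α` being encoded by its defining equation). -/
def IsDunkl (n : ℕ) (Rplus : Finset (V n)) (k : V n → ℂ) (b : V n)
    (Dop : Poly n → Poly n) : Prop :=
  ∀ f : Poly n, ∃ g : V n → Poly n,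
    (∀ α ∈ Rplus, xpoly n α * g α = f - sAct n α f) ∧
    Dop f = der n b f + ∑ α ∈ Rplus, (k α * (⟪b, α⟫ : ℂ)) • g α


lemma inner_sum (n : ℕ) (x y : V n) : (⟪x, y⟫ : ℝ) = ∑ i, x i * y i := by
  simp [PiLp.inner_apply, RCLike.inner_apply]
  exact Finset.sum_congr rfl fun _ _ => mul_comm _ _

lemma xpoly_ne_zero (n : ℕ) {α : V n} (h : α ≠ 0) : xpoly n α ≠ 0 := by
  intro h0
  have h1 := congrArg (MvPolynomial.eval fun j => (α j : ℂ)) h0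
  simp only [xpoly, map_sum, map_mul, MvPolynomial.eval_C, MvPolynomial.eval_X,
    map_zero] at h1
  have h2 : ((∑ i, α i * α i : ℝ) : ℂ) = 0 := by push_cast; exact h1
  have h3 : (∑ i, α i * α i : ℝ) = 0 := by exact_mod_cast h2
  have h4 : ∀ i, α i = 0 := by
    intro i
    have := (Finset.sum_eq_zero_iff_of_nonneg (fun i _ => mul_self_nonneg (α i))).mp h3 i
      (Finset.mem_univ i)
    exact mul_self_eq_zero.mp this
  exact h (PiLp.ext fun i => by simpa using h4 i)

lemma sAct_xpoly (n : ℕ) (α c : V n) :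
    sAct n α (xpoly n c) =
      xpoly n c - MvPolynomial.C ((2 * ⟪c, α⟫ / ⟪α, α⟫ : ℝ) : ℂ) * xpoly n α := by
  have keyR : (2 * ⟪c, α⟫ / ⟪α, α⟫ : ℝ) = ∑ x, c x * (2 * α x / ⟪α, α⟫) := by
    rw [inner_sum, Finset.mul_sum, Finset.sum_div]
    exact Finset.sum_congr rfl fun x _ => by ring
  have h1 : sAct n α (xpoly n c) = ∑ x, MvPolynomial.C ((c x : ℝ) : ℂ) *
      (MvPolynomial.X x - MvPolynomial.C ((2 * α x / ⟪α, α⟫ : ℝ) : ℂ) * xpoly n α) := by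
    conv_lhs => rw [xpoly]
    rw [map_sum]
    exact Finset.sum_congr rfl fun x _ => by
      simp [sAct, MvPolynomial.algebraMap_eq]
  rw [h1, keyR]
  push_cast
  rw [map_sum, Finset.sum_mul]
  conv_rhs => rw [xpoly]
  rw [← Finset.sum_sub_distrib]
  exact Finset.sum_congr rfl fun x _ => by ring_nf; simp only [map_mul]; ring

lemma der_xpoly (n : ℕ) (b c : V n) :
    der n b (xpoly n c) = MvPolynomial.C ((⟪b, c⟫ : ℝ) : ℂ) := by
  rw [inner_sum]
  push_cast
  rw [map_sum, der]
  refine Finset.sum_congr rfl fun i _ => ?_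
  rw [xpoly, map_sum]
  simp [MvPolynomial.pderiv_X, Pi.single_apply, Finset.sum_ite_eq', mul_comm]

lemma der_mul (n : ℕ) (b : V n) (p q : Poly n) :
    der n b (p * q) = der n b p * q + p * der n b q := by
  simp only [der, MvPolynomial.pderiv_mul, mul_add, Finset.sum_add_distrib,
    Finset.mul_sum, Finset.sum_mul]
  congr 1
  · exact Finset.sum_congr rfl fun i _ => by ring
  · exact Finset.sum_congr rfl fun i _ => by ring

/-- the rational Dunkl operators satisfy the cross-relation
`D_b ∘ x_c − x_c ∘ D_b = (b,c)·id + Σ_{α ∈ R_+} k_α (b,α)(c,α^∨)·s_α` on `ℂ[V]`. -/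
theorem stmt_16 (n : ℕ) (R Rplus : Finset (V n))
    (hne : ∀ α ∈ R, α ≠ (0 : V n))
    (hrefl : ∀ α ∈ R, ∀ β ∈ R, β - (2 * ⟪β, α⟫ / ⟪α, α⟫) • α ∈ R)
    (hsub : Rplus ⊆ R)
    (hpos : ∀ α ∈ R, α ∈ Rplus ∨ -α ∈ Rplus)
    (hdisj : ∀ α ∈ Rplus, -α ∉ Rplus)
    (k : V n → ℂ)
    (hk : ∀ α ∈ R, ∀ β ∈ R, k (β - (2 * ⟪β, α⟫ / ⟪α, α⟫) • α) = k β)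
    (b c : V n) (Db : Poly n → Poly n) (hDb : IsDunkl n Rplus k b Db) :
    ∀ f : Poly n,
      Db (xpoly n c * f) - xpoly n c * Db f =
        (⟪b, c⟫ : ℂ) • f +
          ∑ α ∈ Rplus,
            (k α * (⟪b, α⟫ : ℂ) * ((2 * ⟪c, α⟫ / ⟪α, α⟫ : ℝ) : ℂ)) • sAct n α f := by
  intro f
  obtain ⟨g, hg, hDf⟩ := hDb f
  obtain ⟨g', hg', hDxf⟩ := hDb (xpoly n c * f)
  have key : ∀ α ∈ Rplus, g' α =
      xpoly n c * g α + ((2 * ⟪c, α⟫ / ⟪α, α⟫ : ℝ) : ℂ) • sAct n α f := by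
    intro α hα
    have hx := xpoly_ne_zero n (hne α (hsub hα))
    apply mul_left_cancel₀ hx
    have h1 := hg α hα
    have h2 := hg' α hα
    rw [map_mul, sAct_xpoly] at h2
    rw [h2, MvPolynomial.smul_eq_C_mul]
    linear_combination (-(xpoly n c)) * h1
  rw [hDxf, hDf, der_mul, der_xpoly,
    Finset.sum_congr rfl fun α hα => by rw [key α hα]]
  simp only [smul_add, smul_smul, Finset.sum_add_distrib]
  have hswap : ∑ α ∈ Rplus, (k α * (⟪b, α⟫ : ℂ)) • (xpoly n c * g α) =
      xpoly n c * ∑ α ∈ Rplus, (k α * (⟪b, α⟫ : ℂ)) • g α := by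
    rw [Finset.mul_sum]
    exact Finset.sum_congr rfl fun α _ => (mul_smul_comm _ _ _).symm
  rw [hswap, MvPolynomial.smul_eq_C_mul]
  ring

end Stmt16
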